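/- arXiv:1811.07131 — 2 statements merged into one kernel-verified Lean document; each statement's English description precedes it below -/
import Mathlib

section
/- Assume δ_{k0+1} < 1/√(k0+1). Let g : (0,∞) → (0,∞) satisfy lim_{σ→0⁺} g(σ) = ∞ and lim_{σ→0⁺} σ g(σ) = 0. Let k̂(σ) be the smallest k ≥ 0 with ‖r^k‖₂ ≤ σ g(σ) (setting k̂(σ) = n if no such k ≤ n exists). Then OMP with the stopping rule ‖r^k‖₂ ≤ σ g(σ) is high SNR consistent: lim_{σ²→0} P(S_{k̂(σ)} = S) = 1. -/
open MeasureTheory ProbabilityTheory Filter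
open scoped ENNReal NNReal

noncomputable section

namespace RRTPaper

variable {n p : ℕ}

/-- The support of a coefficient vector as a `Finset`. -/
def suppF {p : ℕ} (β : Fin p → ℝ) : Finset (Fin p) :=
  Finset.univ.filter fun j => β j ≠ 0

/-- `β_min`: the smallest absolute value of `β` on its support. -/
def betaMin {p : ℕ} (β : Fin p → ℝ) : ℝ :=
  sInf ((fun j => |β j|) '' {j | β j ≠ 0})

/-- `β_max`: the largest absolute value of `β` on its support. -/
def betaMax {p : ℕ} (β : Fin p → ℝ) : ℝ :=
  sSup ((fun j => |β j|) '' {j | β j ≠ 0})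

/-- The ℓ2 norm of a coefficient vector. -/
def l2norm {p : ℕ} (b : Fin p → ℝ) : ℝ := Real.sqrt (∑ j, (b j) ^ 2)

/-- The design matrix (given by its columns `X j ∈ ℝⁿ`) applied to a coefficient
vector: `Xb = ∑ j, b j • X j`. -/
def applyX (X : Fin p → EuclideanSpace ℝ (Fin n)) (b : Fin p → ℝ) :
    EuclideanSpace ℝ (Fin n) := ∑ j, b j • X j

/-- The set of admissible restricted isometry constants of order `s`:
`δ ≥ 0` such that `(1−δ)‖b‖₂² ≤ ‖Xb‖₂² ≤ (1+δ)‖b‖₂²` for every `b` with at most `s`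
nonzero entries. -/
def ripSet (X : Fin p → EuclideanSpace ℝ (Fin n)) (s : ℕ) : Set ℝ :=
  {δ : ℝ | 0 ≤ δ ∧ ∀ b : Fin p → ℝ, (suppF b).card ≤ s →
    (1 - δ) * (l2norm b) ^ 2 ≤ ‖applyX X b‖ ^ 2 ∧
      ‖applyX X b‖ ^ 2 ≤ (1 + δ) * (l2norm b) ^ 2}

/-- The restricted isometry constant `δ_s` of order `s` (the smallest admissible `δ`). -/
def RIC (X : Fin p → EuclideanSpace ℝ (Fin n)) (s : ℕ) : ℝ := sInf (ripSet X s)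

/-- The OMP support estimate `S_k` after `k` iterations, given the sequence `t` of
selected indices (`t k` is the index selected at iteration `k+1`). -/
def ompSupport {p : ℕ} (t : ℕ → Fin p) (k : ℕ) : Finset (Fin p) :=
  (Finset.range k).image t

/-- The OMP residual `r^k = y − P_k y`, where `P_k` is the orthogonal projection onto
the span of the columns indexed by `S_k`. -/
def ompResidual (X : Fin p → EuclideanSpace ℝ (Fin n)) (y : EuclideanSpace ℝ (Fin n))
    (t : ℕ → Fin p) (k : ℕ) : EuclideanSpace ℝ (Fin n) :=
  y - ↑(Submodule.orthogonalProjectionOnto (Submodule.span ℝ (X '' ↑(ompSupport t k))) y)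

/-- `t` is a valid OMP selection sequence for design `X` and observation `y`:
at every iteration the selected index maximizes the absolute correlation with the
current residual. -/
def IsOMP (X : Fin p → EuclideanSpace ℝ (Fin n)) (y : EuclideanSpace ℝ (Fin n))
    (t : ℕ → Fin p) : Prop :=
  ∀ k : ℕ, ∀ j : Fin p,
    |(inner ℝ (X j) (ompResidual X y t k) : ℝ)| ≤
      |(inner ℝ (X (t k)) (ompResidual X y t k) : ℝ)|

/-- The residual ratio statistic `RR(k) = ‖r^k‖₂ / ‖r^{k−1}‖₂`. -/
def resRatio (X : Fin p → EuclideanSpace ℝ (Fin n)) (y : EuclideanSpace ℝ (Fin n))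
    (t : ℕ → Fin p) (k : ℕ) : ℝ :=
  ‖ompResidual X y t k‖ / ‖ompResidual X y t (k - 1)‖

/-- `k_min`: the first `1 ≤ k ≤ k_max` with `S ⊆ S_k` (`⊤ = ∞` if there is none). -/
def kmin {p : ℕ} (t : ℕ → Fin p) (β : Fin p → ℝ) (kmax : ℕ) : ℕ∞ :=
  sInf ((fun k : ℕ => (k : ℕ∞)) ''
    {k | 1 ≤ k ∧ k ≤ kmax ∧ suppF β ⊆ ompSupport t k})

/-- The Beta function `B(a,b)`. -/
def betaFun (a b : ℝ) : ℝ := Real.Gamma a * Real.Gamma b / Real.Gamma (a + b)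

/-- The CDF of the Beta(a,b) distribution. -/
def betaCDF (a b x : ℝ) : ℝ :=
  (1 / betaFun a b) * ∫ u in (0:ℝ)..x, u ^ (a - 1) * (1 - u) ^ (b - 1)

/-- The inverse of the Beta(a,b) CDF on (0,1) (as a generalized inverse). -/
def betaICDF (a b z : ℝ) : ℝ := sInf {x : ℝ | 0 ≤ x ∧ z ≤ betaCDF a b x}

/-- The residual ratio threshold `Γ_RRT^α(k)`. -/
def GammaRRT (n p kmax : ℕ) (α : ℝ) (k : ℕ) : ℝ :=
  Real.sqrt (betaICDF (((n : ℝ) - k) / 2) (1 / 2)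
    (α / ((kmax : ℝ) * ((p : ℝ) - k + 1))))

/-- `k_RRT = max{1 ≤ k ≤ k_max : RR(k) < Γ_RRT^α(k)}` (`0`, giving `S_RRT = ∅`,
if the set is empty). -/
def kRRT (X : Fin p → EuclideanSpace ℝ (Fin n)) (y : EuclideanSpace ℝ (Fin n))
    (t : ℕ → Fin p) (kmax : ℕ) (α : ℝ) : ℕ :=
  WithBot.unbotD 0 (((Finset.Icc 1 kmax).filter fun k =>
    resRatio X y t k < GammaRRT n p kmax α k).max)

/-- `k_RRM`: the smallest minimizer of `RR(k)` over `1 ≤ k ≤ k_max`. -/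
def kRRM (X : Fin p → EuclideanSpace ℝ (Fin n)) (y : EuclideanSpace ℝ (Fin n))
    (t : ℕ → Fin p) (kmax : ℕ) : ℕ :=
  sInf {k | k ∈ Finset.Icc 1 kmax ∧
    ∀ j ∈ Finset.Icc 1 kmax, resRatio X y t k ≤ resRatio X y t j}

/-- `min_{1 ≤ k ≤ k_max} RR(k)`. -/
def minRR (X : Fin p → EuclideanSpace ℝ (Fin n)) (y : EuclideanSpace ℝ (Fin n))
    (t : ℕ → Fin p) (kmax : ℕ) : ℝ :=
  sInf (resRatio X y t '' Set.Icc 1 kmax)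

/-- The adaptive RRT parameter `α* = min(PFD_finite, (min_k RR(k))^q)`. -/
def alphaStar (X : Fin p → EuclideanSpace ℝ (Fin n)) (y : EuclideanSpace ℝ (Fin n))
    (t : ℕ → Fin p) (kmax : ℕ) (PFD q : ℝ) : ℝ :=
  min PFD (minRR X y t kmax ^ q)

/-- `k_RRTA`: RRT with the adapted parameter `α*`. -/
def kRRTA (X : Fin p → EuclideanSpace ℝ (Fin n)) (y : EuclideanSpace ℝ (Fin n))
    (t : ℕ → Fin p) (kmax : ℕ) (PFD q : ℝ) : ℕ :=
  kRRT X y t kmax (alphaStar X y t kmax PFD q)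

/-- `ε_omp` from Lemma 1 of the paper. -/
def epsOMP (X : Fin p → EuclideanSpace ℝ (Fin n)) (β : Fin p → ℝ) (k0 : ℕ) : ℝ :=
  betaMin β * Real.sqrt (1 - RIC X (k0 + 1)) *
    (1 - Real.sqrt ((k0 : ℝ) + 1) * RIC X (k0 + 1)) /
    (1 + Real.sqrt (1 - RIC X (k0 + 1) ^ 2) - Real.sqrt ((k0 : ℝ) + 1) * RIC X (k0 + 1))

/-- `ε_σ = σ √(n + 2 √(n log n))`. -/
def epsSigma (n : ℕ) (σ : ℝ) : ℝ :=
  σ * Real.sqrt ((n : ℝ) + 2 * Real.sqrt ((n : ℝ) * Real.log (n : ℝ)))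

/-- The distribution of the noise vector `w ~ N(0, σ² Iₙ)` on `ℝⁿ`. -/
def noise (n : ℕ) (σ : ℝ) : Measure (EuclideanSpace ℝ (Fin n)) :=
  (Measure.pi fun _ : Fin n => gaussianReal 0 ⟨σ ^ 2, sq_nonneg σ⟩).map
    (MeasurableEquiv.toLp 2 (Fin n → ℝ))


open Classical in
/-- The smallest `k` with `r k ≤ c`, defaulting to `n` if no such `k ≤ n` exists. -/
def stoppedIter (r : ℕ → ℝ) (c : ℝ) (n : ℕ) : ℕ :=
  if ({k | k ≤ n ∧ r k ≤ c}).Nonempty then sInf {k | k ≤ n ∧ r k ≤ c} else n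

section Aux

variable {n p : ℕ} {X : Fin p → EuclideanSpace ℝ (Fin n)}

lemma mem_suppF {b : Fin p → ℝ} {j : Fin p} : j ∈ suppF b ↔ b j ≠ 0 := by
  simp [suppF]

lemma l2norm_nonneg (b : Fin p → ℝ) : 0 ≤ l2norm b := Real.sqrt_nonneg _

lemma l2norm_sq (b : Fin p → ℝ) : (l2norm b) ^ 2 = ∑ j, b j ^ 2 :=
  Real.sq_sqrt (Finset.sum_nonneg fun j _ => sq_nonneg _)

lemma l2norm_sq_pos {b : Fin p → ℝ} (hb : b ≠ 0) : 0 < (l2norm b) ^ 2 := by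
  rcases Function.ne_iff.1 hb with ⟨j, hj⟩
  rw [l2norm_sq]
  exact Finset.sum_pos' (fun i _ => sq_nonneg _)
    ⟨j, Finset.mem_univ _, (sq_nonneg _).lt_of_ne (Ne.symm (pow_ne_zero 2 hj))⟩

lemma applyX_eq_sum_supp (b : Fin p → ℝ) :
    applyX X b = ∑ j ∈ suppF b, b j • X j := by
  rw [applyX]
  refine (Finset.sum_subset (Finset.subset_univ _) fun x _ hx => ?_).symm
  have : b x = 0 := by simpa [mem_suppF] using hx
  simp [this]

lemma ripSet_mem_card (hX : ∀ j, ‖X j‖ = 1) {s : ℕ} (hs : 1 ≤ s) :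
    (s : ℝ) ∈ ripSet X s := by
  refine ⟨by positivity, fun b hb => ⟨?_, ?_⟩⟩
  · have h1 : (1 - (s : ℝ)) ≤ 0 := by
      have : (1 : ℝ) ≤ (s : ℝ) := by exact_mod_cast hs
      linarith
    have := mul_nonneg (neg_nonneg.2 h1) (sq_nonneg (l2norm b))
    nlinarith [sq_nonneg ‖applyX X b‖]
  · have hnorm : ‖applyX X b‖ ≤ ∑ j ∈ suppF b, |b j| := by
      rw [applyX_eq_sum_supp]
      refine (norm_sum_le _ _).trans (le_of_eq ?_)
      refine Finset.sum_congr rfl fun j _ => ?_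
      rw [norm_smul, hX j, mul_one, Real.norm_eq_abs]
    have hcs : (∑ j ∈ suppF b, |b j|) ^ 2 ≤ (suppF b).card * ∑ j ∈ suppF b, |b j| ^ 2 :=
      sq_sum_le_card_mul_sum_sq
    have hsum : ∑ j ∈ suppF b, |b j| ^ 2 ≤ (l2norm b) ^ 2 := by
      rw [l2norm_sq]
      simpa [sq_abs] using Finset.sum_le_sum_of_subset_of_nonneg (Finset.subset_univ (suppF b))
        (fun i _ _ => sq_nonneg (b i))
    have hcard : ((suppF b).card : ℝ) ≤ (s : ℝ) := by exact_mod_cast hb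
    have h0 : 0 ≤ ∑ j ∈ suppF b, |b j| := Finset.sum_nonneg fun j _ => abs_nonneg _
    have h2 : ‖applyX X b‖ ^ 2 ≤ (∑ j ∈ suppF b, |b j|) ^ 2 :=
      pow_le_pow_left₀ (norm_nonneg _) hnorm 2
    have h3 : ((suppF b).card : ℝ) * ∑ j ∈ suppF b, |b j| ^ 2 ≤ (s : ℝ) * (l2norm b) ^ 2 := by
      refine mul_le_mul hcard hsum (Finset.sum_nonneg fun j _ => sq_nonneg _) (by positivity)
    nlinarith [sq_nonneg (l2norm b)]

lemma ripSet_nonempty (hX : ∀ j, ‖X j‖ = 1) {s : ℕ} (hs : 1 ≤ s) :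
    (ripSet X s).Nonempty := ⟨(s : ℝ), ripSet_mem_card hX hs⟩

lemma ripSet_bddBelow (s : ℕ) : BddBelow (ripSet X s) :=
  ⟨0, fun _ hδ => hδ.1⟩

lemma RIC_nonneg (hX : ∀ j, ‖X j‖ = 1) {s : ℕ} (hs : 1 ≤ s) : 0 ≤ RIC X s :=
  le_csInf (ripSet_nonempty hX hs) fun _ hδ => hδ.1

lemma isClosed_ripSet (s : ℕ) : IsClosed (ripSet X s) := by
  have : ripSet X s = {δ : ℝ | 0 ≤ δ} ∩
      ⋂ (b : Fin p → ℝ) (_ : (suppF b).card ≤ s),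
        ({δ : ℝ | (1 - δ) * (l2norm b) ^ 2 ≤ ‖applyX X b‖ ^ 2} ∩
         {δ : ℝ | ‖applyX X b‖ ^ 2 ≤ (1 + δ) * (l2norm b) ^ 2}) := by
    ext δ
    simp only [ripSet, Set.mem_setOf_eq, Set.mem_inter_iff, Set.mem_iInter]
  rw [this]
  refine (isClosed_le continuous_const continuous_id).inter ?_
  refine isClosed_iInter fun b => isClosed_iInter fun _ => ?_
  exact (isClosed_le (by fun_prop) continuous_const).inter
    (isClosed_le continuous_const (by fun_prop))

lemma RIC_mem (hX : ∀ j, ‖X j‖ = 1) {s : ℕ} (hs : 1 ≤ s) : RIC X s ∈ ripSet X s :=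
  (isClosed_ripSet s).csInf_mem (ripSet_nonempty hX hs) (ripSet_bddBelow s)

end Aux

set_option maxHeartbeats 1000000 in
lemma key_arith {K δ m q b N : ℝ} (hK : 1 ≤ K) (hδ0 : 0 ≤ δ)
    (hδ : δ ^ 2 * (K + 1) < 1) (hm : 0 < m)
    (hql : (1 - δ) * m ≤ q) (hqh : q ≤ (1 + δ) * m)
    (hb2 : b ^ 2 ≤ K * m) (hN : 0 ≤ N)
    (hNA : N ^ 2 ≤ δ * (q - (1 - δ) * m)) (hNB : N ^ 2 ≤ δ * ((1 + δ) * m - q)) :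
    b ^ 2 * N ^ 2 < q ^ 2 := by
  have hb2' : 0 ≤ b ^ 2 := sq_nonneg b
  have hδ1 : δ < 1 := by nlinarith
  have hq0 : 0 < q := lt_of_lt_of_le (by nlinarith) hql
  have e1 : δ ^ 2 * K < 1 - δ ^ 2 := by nlinarith
  have hKm : 0 < K * m := by positivity
  rcases le_or_gt m q with hc | hc
  · -- q ≥ m : use hNB
    have h1 : b ^ 2 * N ^ 2 ≤ K * m * (δ * ((1 + δ) * m - q)) := by
      have hnb0 : 0 ≤ δ * ((1 + δ) * m - q) := le_trans (sq_nonneg N) hNB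
      exact mul_le_mul hb2 hNB (sq_nonneg N) hKm.le
    have h2 : K * m * (δ * ((1 + δ) * m - q)) ≤ K * m * (δ * (δ * m)) := by
      have : (1 + δ) * m - q ≤ δ * m := by nlinarith
      have : δ * ((1 + δ) * m - q) ≤ δ * (δ * m) := mul_le_mul_of_nonneg_left this hδ0
      exact mul_le_mul_of_nonneg_left this hKm.le
    have h3 : K * m * (δ * (δ * m)) < q ^ 2 := by
      nlinarith [mul_pos hm hm, mul_le_mul hc hc hm.le hq0.le, sq_nonneg δ]
    linarith
  · -- q < m : use hNA
    have h1 : b ^ 2 * N ^ 2 ≤ K * m * (δ * (q - (1 - δ) * m)) := by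
      exact mul_le_mul hb2 hNA (sq_nonneg N) hKm.le
    have key : K * m * (δ * (q - (1 - δ) * m)) < q ^ 2 := by
      rcases le_or_gt 2 (δ * K) with hcase | hcase
      · have hδpos : 0 < δ := by nlinarith
        have hA : 0 ≤ (δ * K - 2) * m * (m - q) :=
          mul_nonneg (mul_nonneg (by linarith) hm.le) (by linarith)
        nlinarith [sq_nonneg (q - m), mul_pos (mul_pos hδpos hδpos) (mul_pos hm hm)]
      · rcases le_or_gt (δ * (K + 2)) 2 with hcase2 | hcase2
        · have f1 : 0 ≤ δ * m - (m - q) := by nlinarith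
          have f2 : 0 ≤ (2 - δ * K) * m - (m - q) - δ * m := by nlinarith
          have h2 : 0 ≤ (δ * m - (m - q)) * ((2 - δ * K) * m - (m - q) - δ * m) :=
            mul_nonneg f1 f2
          nlinarith [mul_pos (mul_pos (by linarith : (0:ℝ) < 1 - δ) (by linarith : (0:ℝ) < 1 - δ)) (mul_pos hm hm)]
        · have hδpos : 0 < δ := by nlinarith
          have hv : δ * (K + 4) < 4 := by
            rcases le_or_gt 8 K with hK8 | hK8
            · nlinarith [mul_nonneg hδ0 (by linarith : (0:ℝ) ≤ K - 8)]
            · have h16 : (K + 4) ^ 2 < 16 * (K + 1) := by nlinarith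
              have hsq : (δ * (K + 4)) ^ 2 < 16 := by
                nlinarith [mul_le_mul_of_nonneg_left h16.le (sq_nonneg δ)]
              nlinarith [sq_nonneg (δ * (K + 4) - 4), mul_nonneg hδ0 (by linarith : (0:ℝ) ≤ K + 4)]
          have h3 : 0 < δ * K * (4 - 4 * δ - δ * K) * (m * m) := by
            have : 0 < 4 - 4 * δ - δ * K := by nlinarith
            positivity
          nlinarith [sq_nonneg (δ * K * m - 2 * q)]
    linarith
section Gap

variable {n p : ℕ} {X : Fin p → EuclideanSpace ℝ (Fin n)}

set_option maxHeartbeats 1000000 in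
lemma gap_lemma {k0 : ℕ} (hX : ∀ j, ‖X j‖ = 1) (hk0 : 1 ≤ k0)
    {S : Finset (Fin p)} (hScard : S.card = k0)
    (hδ2 : RIC X (k0 + 1) ^ 2 * ((k0 : ℝ) + 1) < 1)
    {u : Fin p → ℝ} (hu : u ≠ 0) (hsupp : suppF u ⊆ S)
    {j : Fin p} (hj : j ∉ S) :
    ∃ i ∈ S, |(inner ℝ (X j) (applyX X u) : ℝ)| < |(inner ℝ (X i) (applyX X u) : ℝ)| := by
  have hmem := RIC_mem hX (Nat.le_add_left 1 k0)
  set δ := RIC X (k0 + 1) with hδdef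
  set r := applyX X u with hrdef
  have hδ0 : 0 ≤ δ := hmem.1
  set m := ∑ i, u i ^ 2 with hmdef
  have hm0 : 0 < m := by rw [hmdef, ← l2norm_sq]; exact l2norm_sq_pos hu
  have hcardu : (suppF u).card ≤ k0 + 1 :=
    le_trans (le_trans (Finset.card_le_card hsupp) hScard.le) (Nat.le_succ k0)
  have hq' := hmem.2 u hcardu
  rw [l2norm_sq] at hq'
  set q := ‖r‖ ^ 2 with hqdef
  have hql : (1 - δ) * m ≤ q := hq'.1
  have hqh : q ≤ (1 + δ) * m := hq'.2
  have huj : u j = 0 := by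
    by_contra h; exact hj (hsupp (mem_suppF.2 h))
  have hzero : ∀ i, i ∉ S → u i = 0 := fun i hi => by
    by_contra h; exact hi (hsupp (mem_suppF.2 h))
  -- q as a sum over S
  have hqsum : q = ∑ i ∈ S, u i * (inner ℝ (X i) r : ℝ) := by
    have h1 : q = (inner ℝ r r : ℝ) := (real_inner_self_eq_norm_sq r).symm
    have h2 : (inner ℝ r r : ℝ) = ∑ i, u i * (inner ℝ (X i) r : ℝ) := by
      conv_lhs => rw [hrdef, applyX]
      rw [sum_inner]
      exact Finset.sum_congr rfl fun i _ => real_inner_smul_left _ _ _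
    rw [h1, h2]
    exact (Finset.sum_subset (Finset.subset_univ S) fun i _ hi => by
      rw [hzero i hi, zero_mul]).symm
  have hS : S.Nonempty := Finset.card_pos.1 (by omega)
  obtain ⟨i₀, hi₀S, hi₀⟩ := S.exists_max_image (fun i => |(inner ℝ (X i) r : ℝ)|) hS
  set M := |(inner ℝ (X i₀) r : ℝ)| with hMdef
  set b := ∑ i ∈ S, |u i| with hbdef
  have hbpos : 0 < b := by
    rcases Function.ne_iff.1 hu with ⟨i, hi⟩
    have hiS : i ∈ S := hsupp (mem_suppF.2 hi)
    refine lt_of_lt_of_le (abs_pos.2 hi) ?_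
    exact Finset.single_le_sum (fun i _ => abs_nonneg (u i)) hiS
  have hqbM : q ≤ b * M := by
    rw [hqsum, hbdef, Finset.sum_mul]
    refine Finset.sum_le_sum fun i hi => ?_
    refine le_trans (le_abs_self _) ?_
    rw [abs_mul]
    exact mul_le_mul_of_nonneg_left (hi₀ i hi) (abs_nonneg _)
  -- RIP applied to u + t * e_j
  set cj := (inner ℝ (X j) r : ℝ) with hcjdef
  have hrip : ∀ t : ℝ, (1 - δ) * (m + t ^ 2) ≤ q + 2 * t * cj + t ^ 2 ∧
      q + 2 * t * cj + t ^ 2 ≤ (1 + δ) * (m + t ^ 2) := by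
    intro t
    set v := Function.update u j t with hvdef
    have hsuppv : suppF v ⊆ insert j S := by
      intro i hi
      rcases eq_or_ne i j with h | h
      · simp [h]
      · have : v i = u i := Function.update_of_ne h t u
        have : u i ≠ 0 := by rw [← this]; exact mem_suppF.1 hi
        exact Finset.mem_insert_of_mem (hsupp (mem_suppF.2 this))
    have hcardv : (suppF v).card ≤ k0 + 1 := by
      refine le_trans (Finset.card_le_card hsuppv) ?_
      refine le_trans (Finset.card_insert_le _ _) ?_
      omega
    have hrv := hmem.2 v hcardv
    rw [l2norm_sq] at hrv
    have hsumv : ∑ i, v i ^ 2 = m + t ^ 2 := by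
      have he : (fun i => v i ^ 2) = Function.update (fun i => u i ^ 2) j (t ^ 2) := by
        funext i
        rcases eq_or_ne i j with h | h
        · subst h; simp [hvdef]
        · simp [hvdef, Function.update_of_ne h]
      rw [he, Finset.sum_update_of_mem (Finset.mem_univ j)]
      have : ∑ i ∈ Finset.univ \ {j}, u i ^ 2 = m := by
        rw [hmdef, Finset.sum_eq_sum_sdiff_singleton_add (Finset.mem_univ j) (fun i => u i ^ 2),
          huj]
        ring
      rw [this]; ring
    have happly : applyX X v = r + t • X j := by
      have he : (fun i => v i • X i) = Function.update (fun i => u i • X i) j (t • X j) := by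
        funext i
        rcases eq_or_ne i j with h | h
        · subst h; simp [hvdef]
        · simp [hvdef, Function.update_of_ne h]
      rw [applyX]
      rw [show (∑ i, v i • X i) = ∑ i, (fun i => v i • X i) i from rfl, he,
        Finset.sum_update_of_mem (Finset.mem_univ j)]
      have : ∑ i ∈ Finset.univ \ {j}, u i • X i = r := by
        rw [hrdef, applyX, Finset.sum_eq_sum_sdiff_singleton_add (Finset.mem_univ j)
          (fun i => u i • X i), huj]
        simp
      rw [this]; abel
    have hnorm : ‖applyX X v‖ ^ 2 = q + 2 * t * cj + t ^ 2 := by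
      rw [happly, norm_add_sq_real, ← hqdef, real_inner_smul_right, real_inner_comm,
        ← hcjdef, norm_smul, hX j]
      simp [Real.norm_eq_abs, sq_abs]
      ring
    rw [hnorm, hsumv] at hrv
    exact hrv
  -- bounds on |cj|
  have hA0 : 0 ≤ q - (1 - δ) * m := by linarith
  have hB0 : 0 ≤ (1 + δ) * m - q := by linarith
  have hNA : cj ^ 2 ≤ δ * (q - (1 - δ) * m) := by
    rcases hδ0.eq_or_lt with h0 | hδpos
    · -- δ = 0 : cj = 0
      have hqm : q = m := by
        have h1 := (hrip 0).1; have h2 := (hrip 0).2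
        rw [← h0] at h1 h2; simp at h1 h2; linarith
      have hc0 : cj = 0 := by
        have h1 := (hrip 1).1; have h2 := (hrip 1).2
        have h3 := (hrip (-1)).1; have h4 := (hrip (-1)).2
        rw [← h0] at h1 h2 h3 h4; nlinarith
      rw [hc0]; simp [← h0]
    · have h1 := (hrip (-(cj / δ))).1
      have h2 : 2 * (cj / δ) * cj ≤ (q - (1 - δ) * m) + δ * (cj / δ) ^ 2 := by nlinarith
      have hd : δ * (cj / δ) ^ 2 = cj ^ 2 / δ := by field_simp
      rw [hd] at h2
      have : cj ^ 2 / δ ≤ q - (1 - δ) * m := by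
        have : 2 * (cj / δ) * cj = 2 * (cj ^ 2 / δ) := by field_simp
        linarith [this ▸ h2]
      calc cj ^ 2 = δ * (cj ^ 2 / δ) := by field_simp
        _ ≤ δ * (q - (1 - δ) * m) := mul_le_mul_of_nonneg_left this hδ0
  have hNB : cj ^ 2 ≤ δ * ((1 + δ) * m - q) := by
    rcases hδ0.eq_or_lt with h0 | hδpos
    · have hqm : q = m := by
        have h1 := (hrip 0).1; have h2 := (hrip 0).2
        rw [← h0] at h1 h2; simp at h1 h2; linarith
      have hc0 : cj = 0 := by
        have h1 := (hrip 1).1; have h2 := (hrip 1).2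
        have h3 := (hrip (-1)).1; have h4 := (hrip (-1)).2
        rw [← h0] at h1 h2 h3 h4; nlinarith
      rw [hc0]; simp [← h0]
    · have h1 := (hrip (cj / δ)).2
      have h2 : 2 * (cj / δ) * cj ≤ ((1 + δ) * m - q) + δ * (cj / δ) ^ 2 := by nlinarith
      have hd : δ * (cj / δ) ^ 2 = cj ^ 2 / δ := by field_simp
      rw [hd] at h2
      have : cj ^ 2 / δ ≤ (1 + δ) * m - q := by
        have : 2 * (cj / δ) * cj = 2 * (cj ^ 2 / δ) := by field_simp
        linarith [this ▸ h2]
      calc cj ^ 2 = δ * (cj ^ 2 / δ) := by field_simp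
        _ ≤ δ * ((1 + δ) * m - q) := mul_le_mul_of_nonneg_left this hδ0
  -- Cauchy-Schwarz : b² ≤ k0 m
  have hb2 : b ^ 2 ≤ (k0 : ℝ) * m := by
    have h1 : b ^ 2 ≤ (S.card : ℝ) * ∑ i ∈ S, |u i| ^ 2 := by
      have h1' : (∑ i ∈ S, |u i|) ^ 2 ≤ ((S.card : ℕ) : ℝ) * ∑ i ∈ S, |u i| ^ 2 := by
        exact_mod_cast sq_sum_le_card_mul_sum_sq (s := S) (f := fun i => |u i|)
      rw [← hbdef] at h1'
      exact h1'
    have h2 : ∑ i ∈ S, |u i| ^ 2 ≤ m := by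
      rw [hmdef]
      refine le_trans (le_of_eq (Finset.sum_congr rfl fun i _ => sq_abs (u i))) ?_
      exact Finset.sum_le_sum_of_subset_of_nonneg (Finset.subset_univ S)
        fun i _ _ => sq_nonneg (u i)
    calc b ^ 2 ≤ (S.card : ℝ) * ∑ i ∈ S, |u i| ^ 2 := h1
      _ ≤ (k0 : ℝ) * m := by
          rw [hScard]
          exact mul_le_mul_of_nonneg_left h2 (by positivity)
  -- assemble
  have hK1 : (1 : ℝ) ≤ (k0 : ℝ) := by exact_mod_cast hk0
  have hkey : b ^ 2 * cj ^ 2 < q ^ 2 := by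
    have := key_arith hK1 hδ0 hδ2 hm0 hql hqh hb2 (abs_nonneg cj)
      (by rw [sq_abs]; exact hNA) (by rw [sq_abs]; exact hNB)
    rw [sq_abs] at this
    exact this
  have hq0 : 0 < q := by nlinarith
  have hbN : b * |cj| < q := by nlinarith [abs_nonneg cj, sq_abs cj]
  have : b * |cj| < b * M := lt_of_lt_of_le hbN hqbM
  exact ⟨i₀, hi₀S, lt_of_mul_lt_mul_left this hbpos.le⟩

end Gap
section Det

variable {n p : ℕ}

lemma applyX_sub (X : Fin p → EuclideanSpace ℝ (Fin n)) (a b : Fin p → ℝ) :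
    applyX X (a - b) = applyX X a - applyX X b := by
  simp only [applyX, Pi.sub_apply, sub_smul, Finset.sum_sub_distrib]

set_option maxHeartbeats 1000000 in
lemma span_repr (X : Fin p → EuclideanSpace ℝ (Fin n)) (A : Finset (Fin p))
    {v : EuclideanSpace ℝ (Fin n)} (hv : v ∈ Submodule.span ℝ (X '' (↑A : Set (Fin p)))) :
    ∃ u : Fin p → ℝ, suppF u ⊆ A ∧ applyX X u = v := by
  classical
  have himg : X '' (↑A : Set (Fin p)) = Set.range (fun i : {i // i ∈ A} => X i) := by
    ext z
    simp [Set.mem_image, Set.mem_range, Subtype.exists]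
  rw [himg, Submodule.mem_span_range_iff_exists_fun] at hv
  obtain ⟨c, hc⟩ := hv
  refine ⟨fun j => if h : j ∈ A then c ⟨j, h⟩ else 0, ?_, ?_⟩
  · intro i hi
    by_contra h
    exact mem_suppF.1 hi (by simp [h])
  · rw [applyX, ← hc, Finset.univ_eq_attach]
    calc ∑ j : Fin p, (if h : j ∈ A then c ⟨j, h⟩ else 0) • X j
        = ∑ j ∈ A, (if h : j ∈ A then c ⟨j, h⟩ else 0) • X j :=
          (Finset.sum_subset (Finset.subset_univ A) (fun x _ hx => by
            rw [dif_neg hx, zero_smul])).symm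
      _ = ∑ i ∈ A.attach, (if h : (i : Fin p) ∈ A then c ⟨i, h⟩ else 0) • X i :=
          (Finset.sum_attach A _).symm
      _ = ∑ i ∈ A.attach, c i • X i :=
          Finset.sum_congr rfl fun i _ => by rw [dif_pos i.2]

set_option maxHeartbeats 1000000 in
lemma norm_sub_orthProj_le (K : Submodule ℝ (EuclideanSpace ℝ (Fin n)))
    (y v : EuclideanSpace ℝ (Fin n)) (hv : v ∈ K) :
    ‖y - (Submodule.orthogonalProjectionOnto K y : EuclideanSpace ℝ (Fin n))‖ ≤ ‖y - v‖ := by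
  set Py : EuclideanSpace ℝ (Fin n) := ↑(Submodule.orthogonalProjectionOnto K y) with hPy
  have hmem : Py - v ∈ K := Submodule.sub_mem K (SetLike.coe_mem _) hv
  have hperp : (inner ℝ (y - Py) (Py - v) : ℝ) = 0 := by
    have h1 := Submodule.sub_starProjection_mem_orthogonal (K := K) y
    have h2 := (Submodule.mem_orthogonal K (y - Py)).1 h1 (Py - v) hmem
    rw [real_inner_comm] at h2
    exact h2
  have hsum : (y - Py) + (Py - v) = y - v := by abel
  have hsq : ‖y - v‖ ^ 2 = ‖y - Py‖ ^ 2 + ‖Py - v‖ ^ 2 := by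
    rw [← hsum, norm_add_sq_real, hperp]
    ring
  nlinarith [norm_nonneg (y - Py), norm_nonneg (y - v), sq_nonneg ‖Py - v‖]

set_option maxHeartbeats 4000000 in
lemma omp_recovery {k0 : ℕ} (hnp : n < p) (hk0 : 1 ≤ k0)
    (X : Fin p → EuclideanSpace ℝ (Fin n)) (hX : ∀ j, ‖X j‖ = 1)
    (β : Fin p → ℝ) (hβ : (suppF β).card = k0)
    (hδ2 : RIC X (k0 + 1) ^ 2 * ((k0 : ℝ) + 1) < 1) :
    ∃ ε : ℝ, 0 < ε ∧ ∀ (τ : ℝ) (w : EuclideanSpace ℝ (Fin n)) (t : ℕ → Fin p),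
      IsOMP X (applyX X β + w) t → ‖w‖ ≤ τ → ‖w‖ ≤ ε → τ ≤ ε →
      ompSupport t (stoppedIter (fun k => ‖ompResidual X (applyX X β + w) t k‖) τ n)
        = suppF β := by
  classical
  have hmem := RIC_mem hX (Nat.le_add_left 1 k0)
  have hδ0 : 0 ≤ RIC X (k0 + 1) := hmem.1
  have hk0r : (1 : ℝ) ≤ (k0 : ℝ) := by exact_mod_cast hk0
  have hδ1 : RIC X (k0 + 1) < 1 := by
    nlinarith [sq_nonneg (RIC X (k0 + 1) - 1), sq_nonneg (RIC X (k0 + 1))]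
  set S := suppF β with hSdef
  -- k0 ≤ n
  have hk0n : k0 ≤ n := by
    by_contra hlt
    push_neg at hlt
    obtain ⟨Tn, hTnS, hTncard⟩ := Finset.exists_subset_card_eq (s := S) (n := n + 1) (by omega)
    have hdep : ¬ LinearIndependent ℝ (fun i : {i // i ∈ Tn} => X i) := by
      intro hli
      have h1 := hli.fintype_card_le_finrank
      rw [finrank_euclideanSpace_fin] at h1
      rw [Fintype.card_coe, hTncard] at h1
      omega
    obtain ⟨gg, hgsum, i1, hi1⟩ := Fintype.not_linearIndependent_iff.1 hdep
    set b : Fin p → ℝ := fun jj => if h : jj ∈ Tn then gg ⟨jj, h⟩ else 0 with hbdef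
    have hbsupp : suppF b ⊆ Tn := by
      intro i hi
      by_contra h
      exact mem_suppF.1 hi (by simp [hbdef, h])
    have happ : applyX X b = 0 := by
      rw [applyX, ← hgsum, Finset.univ_eq_attach]
      calc ∑ j : Fin p, b j • X j
          = ∑ j ∈ Tn, b j • X j :=
            (Finset.sum_subset (Finset.subset_univ Tn) (fun x _ hx => by
              simp only [hbdef, dif_neg hx, zero_smul])).symm
        _ = ∑ i ∈ Tn.attach, b (i : Fin p) • X i :=
            (Finset.sum_attach Tn _).symm
        _ = ∑ i ∈ Tn.attach, gg i • X i :=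
            Finset.sum_congr rfl fun i _ => by simp only [hbdef, dif_pos i.2]
    have hb0 : b ≠ 0 := by
      intro h
      apply hi1
      have h2 := congrFun h i1
      simpa [hbdef, i1.2] using h2
    have hcard : (suppF b).card ≤ k0 + 1 := by
      have := Finset.card_le_card hbsupp
      omega
    have hrip := (hmem.2 b hcard).1
    rw [happ] at hrip
    simp only [norm_zero] at hrip
    nlinarith [l2norm_sq_pos hb0]
  have hScompl : (Finset.univ \ S).Nonempty := by
    rw [Finset.sdiff_nonempty]
    intro hsub
    have h1 := Finset.card_le_card hsub
    rw [hβ, Finset.card_univ, Fintype.card_fin] at h1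
    omega
  obtain ⟨j₁, hj₁⟩ := hScompl
  have hSne : S.Nonempty := Finset.card_pos.1 (by omega)
  -- family of proper subsets of S
  set Pfam : Finset (Finset (Fin p)) := S.powerset.erase S with hPfam
  have hPne : Pfam.Nonempty := by
    refine ⟨∅, ?_⟩
    rw [hPfam, Finset.mem_erase]
    exact ⟨fun h => hSne.ne_empty h.symm, Finset.empty_mem_powerset S⟩
  -- the noiseless residuals
  set rA : Finset (Fin p) → EuclideanSpace ℝ (Fin n) := fun A =>
    applyX X β - (Submodule.orthogonalProjectionOnto (Submodule.span ℝ (X '' (↑A : Set (Fin p))))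
      (applyX X β) : EuclideanSpace ℝ (Fin n)) with hrAdef
  have hXβmem : applyX X β ∈ Submodule.span ℝ (X '' (↑S : Set (Fin p))) := by
    rw [applyX_eq_sum_supp]
    refine Submodule.sum_mem _ fun i hi => Submodule.smul_mem _ _ ?_
    exact Submodule.subset_span ⟨i, by simpa using hi, rfl⟩
  have hrAprop : ∀ A ∈ Pfam, ∃ u : Fin p → ℝ, u ≠ 0 ∧ suppF u ⊆ S ∧ applyX X u = rA A := by
    intro A hA
    have hAS : A ⊆ S := Finset.mem_powerset.1 (Finset.mem_of_mem_erase hA)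
    have hAne : A ≠ S := Finset.ne_of_mem_erase hA
    obtain ⟨u0, hu0supp, hu0⟩ := span_repr X A
      (SetLike.coe_mem (Submodule.orthogonalProjectionOnto (Submodule.span ℝ (X '' (↑A : Set (Fin p))))
        (applyX X β)))
    refine ⟨β - u0, ?_, ?_, ?_⟩
    · obtain ⟨i, hiS, hiA⟩ := Finset.exists_of_ssubset (hAS.ssubset_of_ne hAne)
      intro h
      have hβi : β i ≠ 0 := mem_suppF.1 hiS
      have hu0i : u0 i = 0 := by
        by_contra h'
        exact hiA (hu0supp (mem_suppF.2 h'))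
      have h2 := congrFun h i
      simp only [Pi.sub_apply, Pi.zero_apply, hu0i, sub_zero] at h2
      exact hβi h2
    · intro i hi
      have hne : β i - u0 i ≠ 0 := by
        have := mem_suppF.1 hi
        simpa using this
      by_cases hiS : i ∈ S
      · exact hiS
      · exfalso
        have hβi : β i = 0 := by
          by_contra h'
          exact hiS (mem_suppF.2 h')
        have hu0i : u0 i = 0 := by
          by_contra h'
          exact hiS (hAS (hu0supp (mem_suppF.2 h')))
        rw [hβi, hu0i, sub_zero] at hne
        exact hne rfl
    · rw [applyX_sub, hu0]
  have hsuppcard : ∀ u : Fin p → ℝ, suppF u ⊆ S → (suppF u).card ≤ k0 + 1 := by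
    intro u hu
    have := Finset.card_le_card hu
    omega
  have hrAne : ∀ A ∈ Pfam, rA A ≠ 0 := by
    intro A hA h0
    obtain ⟨u, hu, hus, hur⟩ := hrAprop A hA
    have hc := (hmem.2 u (hsuppcard u hus)).1
    rw [hur, h0] at hc
    simp only [norm_zero] at hc
    nlinarith [l2norm_sq_pos hu]
  -- max correlations
  set MA : Finset (Fin p) → ℝ :=
    fun A => S.sup' hSne (fun i => |(inner ℝ (X i) (rA A) : ℝ)|) with hMAdef
  set NA : Finset (Fin p) → ℝ :=
    fun A => (Finset.univ \ S).sup' (Finset.nonempty_iff_ne_empty.2 (Finset.ne_empty_of_mem hj₁)) (fun j => |(inner ℝ (X j) (rA A) : ℝ)|) with hNAdef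
  have hNA0 : ∀ A, 0 ≤ NA A := by
    intro A
    exact le_trans (abs_nonneg _) (Finset.le_sup' (fun j => |(inner ℝ (X j) (rA A) : ℝ)|) hj₁)
  have hgap : ∀ A ∈ Pfam, NA A < MA A := by
    intro A hA
    obtain ⟨u, hu, hus, hur⟩ := hrAprop A hA
    rw [hNAdef]
    rw [Finset.sup'_lt_iff]
    intro j hj
    have hjS : j ∉ S := (Finset.mem_sdiff.1 hj).2
    obtain ⟨i, hiS, hlt⟩ := gap_lemma hX hk0 hβ hδ2 hu hus hjS
    rw [hur] at hlt
    exact lt_of_lt_of_le hlt (Finset.le_sup' (fun i => |(inner ℝ (X i) (rA A) : ℝ)|) hiS)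
  set Γ := Pfam.inf' hPne (fun A => MA A - NA A) with hΓdef
  have hΓpos : 0 < Γ := by
    rw [hΓdef, Finset.lt_inf'_iff]
    intro A hA
    linarith [hgap A hA]
  set cmin := Pfam.inf' hPne (fun A => ‖rA A‖) with hcdef
  have hcpos : 0 < cmin := by
    rw [hcdef, Finset.lt_inf'_iff]
    intro A hA
    exact norm_pos_iff.2 (hrAne A hA)
  refine ⟨min (Γ / 3) (cmin / 3), by positivity, ?_⟩
  intro τ w t hOMP hwτ hwε hτε
  set ε := min (Γ / 3) (cmin / 3) with hεdef
  set y := applyX X β + w with hy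
  have hwΓ : ‖w‖ ≤ Γ / 3 := le_trans hwε (min_le_left _ _)
  have hwc : ‖w‖ ≤ cmin / 3 := le_trans hwε (min_le_right _ _)
  have hτc : τ ≤ cmin / 3 := le_trans hτε (min_le_right _ _)
  -- residual decomposition, valid for every k
  have hresid : ∀ k : ℕ,
      ompResidual X y t k = rA (ompSupport t k) +
        (w - (Submodule.orthogonalProjectionOnto (Submodule.span ℝ (X '' (↑(ompSupport t k) : Set (Fin p))))
          w : EuclideanSpace ℝ (Fin n))) := by
    intro k
    rw [ompResidual, hrAdef]
    simp only []
    rw [hy, map_add, Submodule.coe_add]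
    abel
  have hwproj : ∀ k : ℕ,
      ‖w - (Submodule.orthogonalProjectionOnto (Submodule.span ℝ (X '' (↑(ompSupport t k) : Set (Fin p))))
        w : EuclideanSpace ℝ (Fin n))‖ ≤ ‖w‖ := by
    intro k
    simpa using norm_sub_orthProj_le
      (Submodule.span ℝ (X '' (↑(ompSupport t k) : Set (Fin p)))) w 0 (Submodule.zero_mem _)
  have hcorr : ∀ k : ℕ, ∀ i : Fin p,
      |(inner ℝ (X i) (ompResidual X y t k) : ℝ) - (inner ℝ (X i) (rA (ompSupport t k)) : ℝ)|
        ≤ ‖w‖ := by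
    intro k i
    have h1 : (inner ℝ (X i) (ompResidual X y t k) : ℝ) - (inner ℝ (X i) (rA (ompSupport t k)) : ℝ)
        = (inner ℝ (X i) (w - (Submodule.orthogonalProjectionOnto
            (Submodule.span ℝ (X '' (↑(ompSupport t k) : Set (Fin p)))) w :
              EuclideanSpace ℝ (Fin n))) : ℝ) := by
      rw [hresid k, inner_add_right]
      ring
    rw [h1]
    refine le_trans (abs_real_inner_le_norm _ _) ?_
    rw [hX i, one_mul]
    exact hwproj k
  -- the induction
  have hstep : ∀ k : ℕ, k ≤ k0 → ompSupport t k ⊆ S ∧ (ompSupport t k).card = k := by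
    intro k
    induction k with
    | zero => intro _; constructor <;> simp [ompSupport]
    | succ k ih =>
      intro hk1
      obtain ⟨hsub, hcard⟩ := ih (by omega)
      have hAP : ompSupport t k ∈ Pfam := by
        rw [hPfam, Finset.mem_erase, Finset.mem_powerset]
        refine ⟨fun h => ?_, hsub⟩
        rw [h] at hcard
        rw [hβ] at hcard
        omega
      obtain ⟨i₀, hi₀S, hi₀⟩ := Finset.exists_mem_eq_sup' hSne
        (fun i => |(inner ℝ (X i) (rA (ompSupport t k)) : ℝ)|)
      have hgapA : NA (ompSupport t k) + Γ ≤ MA (ompSupport t k) := by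
        have h1 := Finset.inf'_le (fun A => MA A - NA A) hAP
        rw [← hΓdef] at h1
        linarith
      have hlow : MA (ompSupport t k) - ‖w‖
          ≤ |(inner ℝ (X (t k)) (ompResidual X y t k) : ℝ)| := by
        refine le_trans ?_ (hOMP k i₀)
        have h1 := hcorr k i₀
        have h2 := abs_sub_abs_le_abs_sub
          ((inner ℝ (X i₀) (rA (ompSupport t k)) : ℝ))
          ((inner ℝ (X i₀) (ompResidual X y t k) : ℝ))
        rw [abs_sub_comm] at h2
        have h3 : MA (ompSupport t k) = |(inner ℝ (X i₀) (rA (ompSupport t k)) : ℝ)| := hi₀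
        linarith
      have htkS : t k ∈ S := by
        by_contra htk
        have h2 : |(inner ℝ (X (t k)) (ompResidual X y t k) : ℝ)|
            ≤ |(inner ℝ (X (t k)) (rA (ompSupport t k)) : ℝ)| + ‖w‖ := by
          have h4 := hcorr k (t k)
          have h5 := abs_sub_abs_le_abs_sub
            ((inner ℝ (X (t k)) (ompResidual X y t k) : ℝ))
            ((inner ℝ (X (t k)) (rA (ompSupport t k)) : ℝ))
          linarith
        have h3 : |(inner ℝ (X (t k)) (rA (ompSupport t k)) : ℝ)| ≤ NA (ompSupport t k) :=
          Finset.le_sup' (fun j => |(inner ℝ (X j) (rA (ompSupport t k)) : ℝ)|)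
            (Finset.mem_sdiff.2 ⟨Finset.mem_univ _, htk⟩)
        linarith
      have htknew : t k ∉ ompSupport t k := by
        intro htkA
        have hXtk : X (t k) ∈ Submodule.span ℝ (X '' (↑(ompSupport t k) : Set (Fin p))) :=
          Submodule.subset_span ⟨t k, by simpa using htkA, rfl⟩
        have hperp := Submodule.sub_starProjection_mem_orthogonal
          (K := Submodule.span ℝ (X '' (↑(ompSupport t k) : Set (Fin p)))) y
        have hzero : (inner ℝ (X (t k)) (ompResidual X y t k) : ℝ) = 0 := by
          rw [ompResidual]
          exact (Submodule.mem_orthogonal _ _).1 hperp (X (t k)) hXtk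
        rw [hzero, abs_zero] at hlow
        have := hNA0 (ompSupport t k)
        linarith
      have hsucc : ompSupport t (k + 1) = insert (t k) (ompSupport t k) := by
        rw [ompSupport, Finset.range_add_one, Finset.image_insert]
        rfl
      constructor
      · rw [hsucc]
        exact Finset.insert_subset htkS hsub
      · rw [hsucc, Finset.card_insert_of_notMem htknew, hcard]
  -- at step k0 the support is recovered
  have hfull : ompSupport t k0 = S := by
    refine Finset.eq_of_subset_of_card_le (hstep k0 le_rfl).1 ?_
    rw [(hstep k0 le_rfl).2, hβ]
  have hrk0 : ‖ompResidual X y t k0‖ ≤ ‖w‖ := by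
    rw [ompResidual]
    have h1 := norm_sub_orthProj_le
      (Submodule.span ℝ (X '' (↑(ompSupport t k0) : Set (Fin p)))) y
      (applyX X β) (by rw [hfull]; exact hXβmem)
    have h2 : y - applyX X β = w := by rw [hy]; abel
    rw [h2] at h1
    exact h1
  have hrklow : ∀ k : ℕ, k < k0 → cmin - ‖w‖ ≤ ‖ompResidual X y t k‖ := by
    intro k hk
    have hAP : ompSupport t k ∈ Pfam := by
      obtain ⟨hsub, hcard⟩ := hstep k hk.le
      rw [hPfam, Finset.mem_erase, Finset.mem_powerset]
      refine ⟨fun h => ?_, hsub⟩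
      rw [h, hβ] at hcard
      omega
    have h1 : cmin ≤ ‖rA (ompSupport t k)‖ := by
      rw [hcdef]
      exact Finset.inf'_le (fun A => ‖rA A‖) hAP
    have h2 : ‖rA (ompSupport t k)‖ ≤ ‖ompResidual X y t k‖ + ‖w‖ := by
      have h3 := hresid k
      have h4 : rA (ompSupport t k) = ompResidual X y t k -
          (w - (Submodule.orthogonalProjectionOnto
            (Submodule.span ℝ (X '' (↑(ompSupport t k) : Set (Fin p)))) w :
              EuclideanSpace ℝ (Fin n))) := by
        rw [h3]; abel
      rw [h4]
      refine le_trans (norm_sub_le _ _) ?_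
      have := hwproj k
      linarith
    linarith
  -- the stopping time equals k0
  have hZne : {k : ℕ | k ≤ n ∧ ‖ompResidual X y t k‖ ≤ τ}.Nonempty :=
    ⟨k0, hk0n, le_trans hrk0 hwτ⟩
  have hstop : stoppedIter (fun k => ‖ompResidual X y t k‖) τ n = k0 := by
    unfold stoppedIter
    rw [if_pos hZne]
    refine le_antisymm (Nat.sInf_le ⟨hk0n, le_trans hrk0 hwτ⟩) ?_
    by_contra h
    push_neg at h
    have hmemZ := Nat.sInf_mem hZne
    have hklt : sInf {k : ℕ | k ≤ n ∧ ‖ompResidual X y t k‖ ≤ τ} < k0 := h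
    have h1 := hrklow _ hklt
    have h2 := hmemZ.2
    have hw0 : (0:ℝ) ≤ ‖w‖ := norm_nonneg w
    linarith
  rw [hstop]
  exact hfull

end Det
section Prob

lemma tail_tendsto :
    Tendsto (fun M : ℝ => (gaussianReal 0 1) {x : ℝ | M < |x|}) atTop (nhds 0) := by
  have hnat : Tendsto (fun k : ℕ => (gaussianReal 0 1) {x : ℝ | (k : ℝ) < |x|})
      atTop (nhds 0) := by
    have hmeas : ∀ k : ℕ, NullMeasurableSet {x : ℝ | (k : ℝ) < |x|} (gaussianReal 0 1) :=
      fun k => ((isOpen_lt continuous_const continuous_abs).measurableSet).nullMeasurableSet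
    have hanti : Antitone (fun k : ℕ => {x : ℝ | (k : ℝ) < |x|}) := by
      intro a b hab x hx
      simp only [Set.mem_setOf_eq] at hx ⊢
      exact lt_of_le_of_lt (by exact_mod_cast hab) hx
    have h := tendsto_measure_iInter_atTop hmeas hanti ⟨0, measure_ne_top _ _⟩
    have hempty : ⋂ k : ℕ, {x : ℝ | (k : ℝ) < |x|} = ∅ := by
      ext x
      simp only [Set.mem_iInter, Set.mem_setOf_eq, Set.mem_empty_iff_false, iff_false,
        not_forall, not_lt]
      obtain ⟨k, hk⟩ := exists_nat_gt |x|
      exact ⟨k, hk.le⟩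
    rw [hempty, measure_empty] at h
    exact h
  refine tendsto_of_tendsto_of_tendsto_of_le_of_le'
    tendsto_const_nhds (hnat.comp tendsto_nat_floor_atTop) ?_ ?_
  · exact Eventually.of_forall fun M => zero_le
  · filter_upwards [eventually_ge_atTop (0 : ℝ)] with M hM
    exact measure_mono fun x hx => lt_of_le_of_lt (Nat.floor_le hM) hx

lemma gaussian_scaled (σ : ℝ) (s : Set ℝ) (hs : MeasurableSet s) :
    gaussianReal 0 ⟨σ ^ 2, sq_nonneg σ⟩ s = gaussianReal 0 1 ((σ * ·) ⁻¹' s) := by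
  have h1 : (gaussianReal 0 1).map (σ * ·) = gaussianReal 0 ⟨σ ^ 2, sq_nonneg σ⟩ := by
    rw [gaussianReal_map_const_mul σ, mul_zero, mul_one]
    rfl
  rw [← h1, Measure.map_apply (measurable_const_mul σ) hs]

lemma noise_tail {n : ℕ} (hn : 1 ≤ n) {σ a : ℝ} (hσ : 0 < σ) (ha : 0 < a) :
    noise n σ {w : EuclideanSpace ℝ (Fin n) | a < ‖w‖}
      ≤ (n : ℝ≥0∞) * gaussianReal 0 1 {x : ℝ | a / (σ * Real.sqrt n) < |x|} := by
  have hsn : (0 : ℝ) < Real.sqrt n := Real.sqrt_pos.2 (by exact_mod_cast hn)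
  have hEmeas : MeasurableSet {w : EuclideanSpace ℝ (Fin n) | a < ‖w‖} :=
    (isOpen_lt continuous_const continuous_norm).measurableSet
  rw [noise, Measure.map_apply (MeasurableEquiv.measurable _) hEmeas]
  have hpre : (MeasurableEquiv.toLp 2 (Fin n → ℝ)) ⁻¹'
      {w : EuclideanSpace ℝ (Fin n) | a < ‖w‖}
      ⊆ ⋃ i : Fin n, {x : Fin n → ℝ | a / Real.sqrt n < |x i|} := by
    intro x hx
    simp only [Set.mem_preimage, Set.mem_setOf_eq] at hx
    by_contra hcon
    simp only [Set.mem_iUnion, Set.mem_setOf_eq, not_exists, not_lt] at hcon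
    have hnorm : ‖(MeasurableEquiv.toLp 2 (Fin n → ℝ)) x‖
        = Real.sqrt (∑ i, |x i| ^ 2) := by
      rw [EuclideanSpace.norm_eq]
      congr 1
    have hsum : ∑ i, |x i| ^ 2 ≤ (n : ℝ) * (a / Real.sqrt n) ^ 2 := by
      calc ∑ i, |x i| ^ 2 ≤ ∑ _i : Fin n, (a / Real.sqrt n) ^ 2 :=
            Finset.sum_le_sum fun i _ => pow_le_pow_left₀ (abs_nonneg _) (hcon i) 2
        _ = (n : ℝ) * (a / Real.sqrt n) ^ 2 := by
            rw [Finset.sum_const, Finset.card_univ, Fintype.card_fin, nsmul_eq_mul]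
    have hda : (n : ℝ) * (a / Real.sqrt n) ^ 2 = a ^ 2 := by
      rw [div_pow, Real.sq_sqrt (by positivity : (0:ℝ) ≤ (n:ℝ))]
      field_simp
    rw [hda] at hsum
    have hle : ‖(MeasurableEquiv.toLp 2 (Fin n → ℝ)) x‖ ≤ a := by
      rw [hnorm]
      calc Real.sqrt (∑ i, |x i| ^ 2) ≤ Real.sqrt (a ^ 2) := Real.sqrt_le_sqrt hsum
        _ = a := Real.sqrt_sq ha.le
    linarith
  refine le_trans (measure_mono hpre) (le_trans (measure_iUnion_le _) ?_)
  have hone : ∀ i : Fin n,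
      (Measure.pi fun _ : Fin n => gaussianReal 0 ⟨σ ^ 2, sq_nonneg σ⟩)
        {x : Fin n → ℝ | a / Real.sqrt n < |x i|}
      = gaussianReal 0 1 {x : ℝ | a / (σ * Real.sqrt n) < |x|} := by
    intro i
    have hset : {x : Fin n → ℝ | a / Real.sqrt n < |x i|}
        = Set.pi Set.univ (fun j => if j = i then {y : ℝ | a / Real.sqrt n < |y|}
            else Set.univ) := by
      ext x
      simp only [Set.mem_setOf_eq, Set.mem_pi, Set.mem_univ, forall_true_left]
      constructor
      · intro h j
        by_cases hj : j = i
        · subst hj; simpa using h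
        · simp [hj]
      · intro h
        have := h i
        simpa using this
    have hSF : ∀ v : ℝ≥0, SigmaFinite (gaussianReal 0 v) := fun _ => inferInstance
    rw [hset, @Measure.pi_pi _ _ _ _ (fun _ => gaussianReal 0 ⟨σ ^ 2, sq_nonneg σ⟩) (fun _ => hSF _)]
    have hprod : ∀ j : Fin n, gaussianReal 0 ⟨σ ^ 2, sq_nonneg σ⟩
        (if j = i then {y : ℝ | a / Real.sqrt n < |y|} else Set.univ)
        = if j = i then gaussianReal 0 ⟨σ ^ 2, sq_nonneg σ⟩ {y : ℝ | a / Real.sqrt n < |y|}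
            else 1 := by
      intro j
      have hP : ∀ v : ℝ≥0, (gaussianReal 0 v) Set.univ = 1 := fun _ => measure_univ
      by_cases hj : j = i <;> simp [hj]
      exact hP _
    rw [Finset.prod_congr rfl (fun j _ => hprod j), Finset.prod_ite_eq' Finset.univ i
      (fun _ => gaussianReal 0 ⟨σ ^ 2, sq_nonneg σ⟩ {y : ℝ | a / Real.sqrt n < |y|}),
      if_pos (Finset.mem_univ i),
      gaussian_scaled σ _ ((isOpen_lt continuous_const continuous_abs).measurableSet)]
    congr 1
    ext y
    simp only [Set.mem_preimage, Set.mem_setOf_eq]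
    rw [abs_mul, abs_of_pos hσ, div_lt_iff₀ hsn,
      div_lt_iff₀ (show (0:ℝ) < σ * Real.sqrt n by positivity),
      show σ * |y| * Real.sqrt (n:ℝ) = |y| * (σ * Real.sqrt (n:ℝ)) by ring]
  calc (∑' i : Fin n, (Measure.pi fun _ : Fin n => gaussianReal 0 ⟨σ ^ 2, sq_nonneg σ⟩)
        {x : Fin n → ℝ | a / Real.sqrt n < |x i|})
      = ∑ i : Fin n, (Measure.pi fun _ : Fin n => gaussianReal 0 ⟨σ ^ 2, sq_nonneg σ⟩)
        {x : Fin n → ℝ | a / Real.sqrt n < |x i|} := tsum_fintype _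
    _ = ∑ _i : Fin n, gaussianReal 0 1 {x : ℝ | a / (σ * Real.sqrt n) < |x|} :=
        Finset.sum_congr rfl fun i _ => hone i
    _ = (n : ℝ≥0∞) * gaussianReal 0 1 {x : ℝ | a / (σ * Real.sqrt n) < |x|} := by
        rw [Finset.sum_const, Finset.card_univ, Fintype.card_fin, nsmul_eq_mul]
    _ ≤ (n : ℝ≥0∞) * gaussianReal 0 1 {x : ℝ | a / (σ * Real.sqrt n) < |x|} := le_rfl

end Prob
/-- If `δ_{k0+1} < 1/√(k0+1)` and `g` satisfies `g(σ) → ∞` and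
`σ g(σ) → 0` as `σ → 0⁺`, then OMP with the stopping rule `‖r^k‖₂ ≤ σ g(σ)` is
high SNR consistent. -/
theorem statement_3 {n p k0 : ℕ} (hnp : n < p) (hk0 : 1 ≤ k0)
    (X : Fin p → EuclideanSpace ℝ (Fin n)) (hX : ∀ j, ‖X j‖ = 1)
    (β : Fin p → ℝ) (hβ : (suppF β).card = k0)
    (T : EuclideanSpace ℝ (Fin n) → ℕ → Fin p)
    (hT : ∀ w, IsOMP X (applyX X β + w) (T w))
    (hRIC : RIC X (k0 + 1) < 1 / Real.sqrt ((k0 : ℝ) + 1))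
    (g : ℝ → ℝ) (hgpos : ∀ σ : ℝ, 0 < σ → 0 < g σ)
    (hg1 : Filter.Tendsto g (nhdsWithin 0 (Set.Ioi 0)) Filter.atTop)
    (hg2 : Filter.Tendsto (fun σ : ℝ => σ * g σ) (nhdsWithin 0 (Set.Ioi 0)) (nhds 0)) :
    Filter.Tendsto
      (fun σ : ℝ => (noise n σ {w | ompSupport (T w)
          (stoppedIter (fun k => ‖ompResidual X (applyX X β + w) (T w) k‖) (σ * g σ) n)
        = suppF β}).toReal)
      (nhdsWithin 0 (Set.Ioi 0)) (nhds 1) := by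
  classical
  have hδ0 : 0 ≤ RIC X (k0 + 1) := (RIC_mem hX (Nat.le_add_left 1 k0)).1
  have hk0pos : (0:ℝ) < (k0:ℝ) + 1 := by positivity
  have hsqrt : 0 < Real.sqrt ((k0:ℝ) + 1) := Real.sqrt_pos.2 hk0pos
  have hδ2 : RIC X (k0 + 1) ^ 2 * ((k0:ℝ) + 1) < 1 := by
    have hδs : RIC X (k0 + 1) * Real.sqrt ((k0:ℝ) + 1) < 1 := by
      have h2 := (lt_div_iff₀ hsqrt).1 hRIC
      linarith
    have h1 : Real.sqrt ((k0:ℝ) + 1) ^ 2 = (k0:ℝ) + 1 := Real.sq_sqrt hk0pos.le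
    nlinarith [mul_nonneg hδ0 hsqrt.le]
  obtain ⟨ε, hε, hdet⟩ := omp_recovery hnp hk0 X hX β hβ hδ2
  have hn1 : 1 ≤ n := by
    by_contra hn
    push_neg at hn
    have hn0 : n = 0 := by omega
    subst hn0
    have hj : (0:ℕ) < p := by omega
    have h1 := hX ⟨0, hj⟩
    have hz : X ⟨0, hj⟩ = 0 := Subsingleton.elim _ _
    rw [hz, norm_zero] at h1
    exact zero_ne_one h1
  have hsn : (0:ℝ) < Real.sqrt n := Real.sqrt_pos.2 (by exact_mod_cast hn1)
  have hPM : ∀ σ : ℝ, IsProbabilityMeasure (noise n σ) := fun σ => by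
    rw [noise]
    have hG : ∀ v : ℝ≥0, IsProbabilityMeasure (Measure.pi fun _ : Fin n => gaussianReal 0 v) :=
      fun _ => inferInstance
    have := hG ⟨σ ^ 2, sq_nonneg σ⟩
    exact Measure.isProbabilityMeasure_map (MeasurableEquiv.measurable _).aemeasurable
  set bad : ℝ → Set (EuclideanSpace ℝ (Fin n)) :=
    fun σ => {w | min ε (σ * g σ) < ‖w‖} with hbaddef
  have hbadmeas : ∀ σ, MeasurableSet (bad σ) := fun σ =>
    (isOpen_lt continuous_const continuous_norm).measurableSet
  -- auxiliary tendsto facts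
  have hT1 : Tendsto (fun σ : ℝ => ε / (σ * Real.sqrt n)) (nhdsWithin 0 (Set.Ioi 0)) atTop := by
    have h1 : Tendsto (fun σ : ℝ => σ⁻¹) (nhdsWithin 0 (Set.Ioi 0)) atTop :=
      tendsto_inv_nhdsGT_zero
    have h2 : (fun σ : ℝ => ε / (σ * Real.sqrt n)) = fun σ => (ε / Real.sqrt n) * σ⁻¹ := by
      funext σ
      rw [div_mul_eq_div_div_swap, div_eq_mul_inv]
    rw [h2]
    exact h1.const_mul_atTop (by positivity)
  have hT2 : Tendsto (fun σ : ℝ => g σ / Real.sqrt n) (nhdsWithin 0 (Set.Ioi 0)) atTop :=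
    hg1.atTop_div_const hsn
  -- bound on the bad event
  have hbound : ∀ᶠ σ in nhdsWithin 0 (Set.Ioi 0),
      noise n σ (bad σ) ≤
        (n : ℝ≥0∞) * gaussianReal 0 1 {x : ℝ | ε / (σ * Real.sqrt n) < |x|}
        + (n : ℝ≥0∞) * gaussianReal 0 1 {x : ℝ | g σ / Real.sqrt n < |x|} := by
    filter_upwards [self_mem_nhdsWithin] with σ hσ
    have hσ0 : (0:ℝ) < σ := hσ
    have hgσ : 0 < g σ := hgpos σ hσ0
    have hτ : 0 < σ * g σ := by positivity
    have hsplit : bad σ ⊆ {w : EuclideanSpace ℝ (Fin n) | ε < ‖w‖}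
        ∪ {w : EuclideanSpace ℝ (Fin n) | σ * g σ < ‖w‖} := by
      intro w hw
      simp only [hbaddef, Set.mem_setOf_eq, min_lt_iff] at hw
      exact hw.imp (fun h => h) (fun h => h)
    refine le_trans (measure_mono hsplit) (le_trans (measure_union_le _ _) ?_)
    refine add_le_add (noise_tail hn1 hσ0 hε) ?_
    have h2 := noise_tail hn1 hσ0 hτ
    have h3 : (σ * g σ) / (σ * Real.sqrt n) = g σ / Real.sqrt n := by
      rw [mul_div_mul_left _ _ (ne_of_gt hσ0)]
    rw [h3] at h2
    exact h2
  -- bad probability tends to 0 in ℝ≥0∞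
  have hbadto : Tendsto (fun σ => noise n σ (bad σ)) (nhdsWithin 0 (Set.Ioi 0)) (nhds 0) := by
    have h4 : Tendsto (fun σ : ℝ =>
        (n : ℝ≥0∞) * gaussianReal 0 1 {x : ℝ | ε / (σ * Real.sqrt n) < |x|})
        (nhdsWithin 0 (Set.Ioi 0)) (nhds ((n : ℝ≥0∞) * 0)) :=
      ENNReal.Tendsto.const_mul (tail_tendsto.comp hT1) (Or.inr (ENNReal.natCast_ne_top n))
    have h5 : Tendsto (fun σ : ℝ =>
        (n : ℝ≥0∞) * gaussianReal 0 1 {x : ℝ | g σ / Real.sqrt n < |x|})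
        (nhdsWithin 0 (Set.Ioi 0)) (nhds ((n : ℝ≥0∞) * 0)) :=
      ENNReal.Tendsto.const_mul (tail_tendsto.comp hT2) (Or.inr (ENNReal.natCast_ne_top n))
    have h6 := h4.add h5
    rw [mul_zero, add_zero] at h6
    exact tendsto_of_tendsto_of_tendsto_of_le_of_le'
      tendsto_const_nhds h6 (Eventually.of_forall fun σ => zero_le) hbound
  have hbadreal : Tendsto (fun σ => (noise n σ (bad σ)).toReal)
      (nhdsWithin 0 (Set.Ioi 0)) (nhds 0) := by
    have := (ENNReal.tendsto_toReal (a := 0) (by simp)).comp hbadto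
    exact this
  -- final squeeze
  have hlow : ∀ᶠ σ in nhdsWithin 0 (Set.Ioi 0),
      1 - (noise n σ (bad σ)).toReal ≤
        (noise n σ {w | ompSupport (T w)
          (stoppedIter (fun k => ‖ompResidual X (applyX X β + w) (T w) k‖) (σ * g σ) n)
          = suppF β}).toReal := by
    have hev : ∀ᶠ σ in nhdsWithin 0 (Set.Ioi 0), σ * g σ < ε :=
      hg2.eventually (eventually_lt_nhds hε)
    filter_upwards [self_mem_nhdsWithin, hev] with σ hσ hτε
    have hσ0 : (0:ℝ) < σ := hσ
    haveI := hPM σ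
    have hsub : (bad σ)ᶜ ⊆ {w | ompSupport (T w)
        (stoppedIter (fun k => ‖ompResidual X (applyX X β + w) (T w) k‖) (σ * g σ) n)
        = suppF β} := by
      intro w hw
      simp only [hbaddef, Set.mem_compl_iff, Set.mem_setOf_eq, not_lt] at hw
      exact hdet (σ * g σ) w (T w) (hT w)
        (le_trans hw (min_le_right _ _)) (le_trans hw (min_le_left _ _)) hτε.le
    have h1 : noise n σ (bad σ)ᶜ = 1 - noise n σ (bad σ) :=
      prob_compl_eq_one_sub (hbadmeas σ)
    have h2 : noise n σ (bad σ)ᶜ ≤ noise n σ {w | ompSupport (T w)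
        (stoppedIter (fun k => ‖ompResidual X (applyX X β + w) (T w) k‖) (σ * g σ) n)
        = suppF β} := measure_mono hsub
    have h3 : (noise n σ (bad σ)ᶜ).toReal ≤ (noise n σ {w | ompSupport (T w)
        (stoppedIter (fun k => ‖ompResidual X (applyX X β + w) (T w) k‖) (σ * g σ) n)
        = suppF β}).toReal :=
      ENNReal.toReal_mono (measure_ne_top _ _) h2
    have h4 : (noise n σ (bad σ)ᶜ).toReal = 1 - (noise n σ (bad σ)).toReal := by
      rw [h1, ENNReal.toReal_sub_of_le prob_le_one ENNReal.one_ne_top, ENNReal.toReal_one]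
    rw [← h4]
    exact h3
  have hup : ∀ᶠ σ in nhdsWithin 0 (Set.Ioi 0),
      (noise n σ {w | ompSupport (T w)
        (stoppedIter (fun k => ‖ompResidual X (applyX X β + w) (T w) k‖) (σ * g σ) n)
        = suppF β}).toReal ≤ 1 := by
    refine Eventually.of_forall fun σ => ?_
    haveI := hPM σ
    have h := prob_le_one (μ := noise n σ) (s := {w | ompSupport (T w)
      (stoppedIter (fun k => ‖ompResidual X (applyX X β + w) (T w) k‖) (σ * g σ) n)
      = suppF β})
    have h2 := ENNReal.toReal_mono ENNReal.one_ne_top h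
    simpa using h2
  have hlim : Tendsto (fun σ => 1 - (noise n σ (bad σ)).toReal)
      (nhdsWithin 0 (Set.Ioi 0)) (nhds 1) := by
    have := tendsto_const_nhds (x := (1:ℝ)) (f := nhdsWithin (0:ℝ) (Set.Ioi 0)) |>.sub hbadreal
    simpa using this
  exact tendsto_of_tendsto_of_tendsto_of_le_of_le' hlim tendsto_const_nhds hlow hup

end RRTPaper
end
end

section
/- Fix integers n > k0 ≥ 1, p ≥ k0, and 1 ≤ k_max ≤ p. Let f : (0,∞) → (0,1) be a function with lim_{x→0⁺} f(x) = 0 and lim_{x→0⁺} f(x)^{2/(n−k0)} / x² = ∞. Then lim_{x→0⁺} Γ_RRT^{f(x)}(k0) / x = ∞, where Γ_RRT^{f(x)}(k0) = sqrt( F⁻¹_{(n−k0)/2, 1/2}( f(x)/(k_max(p−k0+1)) ) ). -/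
open MeasureTheory ProbabilityTheory Filter
open scoped ENNReal NNReal

noncomputable section

namespace RRTPaper

variable {n p : ℕ}

/-! ### Auxiliary lemmas for Statement 13 -/

lemma betaFun_pos' {a b : ℝ} (ha : 0 < a) (hb : 0 < b) : 0 < betaFun a b :=
  div_pos (mul_pos (Real.Gamma_pos_of_pos ha) (Real.Gamma_pos_of_pos hb))
    (Real.Gamma_pos_of_pos (by linarith))

lemma betaIntegral_real' {a b : ℝ} (ha : 0 < a) (hb : 0 < b) :
    ∫ u in (0:ℝ)..1, u ^ (a - 1) * (1 - u) ^ (b - 1) = betaFun a b := by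
  have h := Complex.Gamma_mul_Gamma_eq_betaIntegral (s := (a:ℂ)) (t := (b:ℂ))
    (by simpa using ha) (by simpa using hb)
  have hint : Complex.betaIntegral (a:ℂ) (b:ℂ)
      = ((∫ u in (0:ℝ)..1, u ^ (a - 1) * (1 - u) ^ (b - 1) : ℝ) : ℂ) := by
    have hcast : ((∫ u in (0:ℝ)..1, u ^ (a - 1) * (1 - u) ^ (b - 1) : ℝ) : ℂ)
        = ∫ u in (0:ℝ)..1, ((u ^ (a - 1) * (1 - u) ^ (b - 1) : ℝ) : ℂ) :=
      RCLike.intervalIntegral_ofReal.symm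
    rw [Complex.betaIntegral, hcast]
    refine intervalIntegral.integral_congr fun x hx => ?_
    rw [Set.uIcc_of_le (zero_le_one' ℝ)] at hx
    have h1 : (0:ℝ) ≤ x := hx.1
    have h2 : (0:ℝ) ≤ 1 - x := by linarith [hx.2]
    rw [Complex.ofReal_mul, Complex.ofReal_cpow h1, Complex.ofReal_cpow h2]
    push_cast
    ring
  rw [hint, Complex.Gamma_ofReal, Complex.Gamma_ofReal, ← Complex.ofReal_add,
    Complex.Gamma_ofReal, ← Complex.ofReal_mul, ← Complex.ofReal_mul] at h
  have h' := Complex.ofReal_inj.mp h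
  have hG : Real.Gamma (a + b) ≠ 0 := (Real.Gamma_pos_of_pos (by linarith)).ne'
  rw [betaFun, eq_div_iff hG, h']
  ring

lemma betaCDF_one' {a b : ℝ} (ha : 0 < a) (hb : 0 < b) : betaCDF a b 1 = 1 := by
  rw [betaCDF, betaIntegral_real' ha hb,
    one_div_mul_cancel (betaFun_pos' ha hb).ne']

lemma integ_aux {a : ℝ} (ha : 0 < a) {c : ℝ} (hc0 : 0 ≤ c) (hc : c ≤ 1/2) :
    IntervalIntegrable (fun u : ℝ => u ^ (a - 1) * (1 - u) ^ ((1:ℝ)/2 - 1))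
      MeasureTheory.volume 0 c := by
  apply IntervalIntegrable.mul_continuousOn
    (intervalIntegral.intervalIntegrable_rpow' (by linarith))
  apply ContinuousOn.rpow_const
  · exact (continuous_const.sub continuous_id).continuousOn
  · intro x hx
    rw [Set.uIcc_of_le hc0] at hx
    left
    have : x ≤ 1/2 := le_trans hx.2 hc
    intro hcontra
    nlinarith [hcontra]

/-- The constant in the upper bound `betaCDF a (1/2) x ≤ auxC a * x ^ a`. -/
def auxC (a : ℝ) : ℝ := ((1:ℝ)/2) ^ ((1:ℝ)/2 - 1) / (betaFun a (1/2) * a)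

lemma auxC_pos {a : ℝ} (ha : 0 < a) : 0 < auxC a :=
  div_pos (Real.rpow_pos_of_pos one_half_pos _)
    (mul_pos (betaFun_pos' ha one_half_pos) ha)

lemma betaCDF_le_aux {a : ℝ} (ha : 0 < a) {x : ℝ} (hx0 : 0 ≤ x) (hx : x ≤ 1/2) :
    betaCDF a (1/2) x ≤ auxC a * x ^ a := by
  have hB := betaFun_pos' ha one_half_pos
  have hK : (0:ℝ) < ((1:ℝ)/2) ^ ((1:ℝ)/2 - 1) := Real.rpow_pos_of_pos one_half_pos _
  have hmono : (∫ u in (0:ℝ)..x, u ^ (a - 1) * (1 - u) ^ ((1:ℝ)/2 - 1))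
      ≤ ∫ u in (0:ℝ)..x, u ^ (a - 1) * ((1:ℝ)/2) ^ ((1:ℝ)/2 - 1) := by
    apply intervalIntegral.integral_mono_on hx0 (integ_aux ha hx0 hx)
      ((intervalIntegral.intervalIntegrable_rpow' (by linarith)).mul_const _)
    intro u hu
    have hu1 : (1:ℝ)/2 ≤ 1 - u := by linarith [hu.2, hx]
    exact mul_le_mul_of_nonneg_left
      (Real.rpow_le_rpow_of_nonpos one_half_pos hu1 (by norm_num))
      (Real.rpow_nonneg hu.1 _)
  have hint : (∫ u in (0:ℝ)..x, u ^ (a - 1) * ((1:ℝ)/2) ^ ((1:ℝ)/2 - 1))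
      = ((1:ℝ)/2) ^ ((1:ℝ)/2 - 1) * (x ^ a / a) := by
    rw [intervalIntegral.integral_mul_const, integral_rpow (Or.inl (by linarith))]
    rw [show a - 1 + 1 = a from by ring, Real.zero_rpow ha.ne']
    ring
  have key : betaCDF a (1/2) x ≤ (1 / betaFun a (1/2)) *
      (((1:ℝ)/2) ^ ((1:ℝ)/2 - 1) * (x ^ a / a)) := by
    rw [betaCDF]
    have : (∫ u in (0:ℝ)..x, u ^ (a - 1) * (1 - u) ^ ((1:ℝ)/2 - 1))
        ≤ ((1:ℝ)/2) ^ ((1:ℝ)/2 - 1) * (x ^ a / a) := hint ▸ hmono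
    have h1B : (0:ℝ) ≤ 1 / betaFun a (1/2) := by positivity
    exact mul_le_mul_of_nonneg_left this h1B
  have hfin : (1 / betaFun a (1/2)) * (((1:ℝ)/2) ^ ((1:ℝ)/2 - 1) * (x ^ a / a))
      = auxC a * x ^ a := by
    unfold auxC
    field_simp
  exact le_of_le_of_eq key hfin

lemma betaICDF_ge_aux {a : ℝ} (ha : 0 < a) {z : ℝ} (hz0 : 0 < z) (hz1 : z ≤ 1) :
    min ((1:ℝ)/2) ((z / auxC a) ^ (1/a)) ≤ betaICDF a (1/2) z := by
  have hC := auxC_pos ha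
  apply le_csInf
  · exact ⟨1, by norm_num, by rw [betaCDF_one' ha one_half_pos]; exact hz1⟩
  · rintro x ⟨hx0, hxz⟩
    rcases le_or_gt ((1:ℝ)/2) x with h | h
    · exact le_trans (min_le_left _ _) h
    · refine le_trans (min_le_right _ _) ?_
      have hb := betaCDF_le_aux ha hx0 h.le
      have h2 : z / auxC a ≤ x ^ a := by
        rw [div_le_iff₀ hC]
        calc z ≤ auxC a * x ^ a := le_trans hxz hb
          _ = x ^ a * auxC a := mul_comm _ _
      calc (z / auxC a) ^ (1/a) ≤ (x ^ a) ^ (1/a) :=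
            Real.rpow_le_rpow (le_of_lt (div_pos hz0 hC)) h2 (by positivity)
        _ = x ^ (a * (1/a)) := (Real.rpow_mul hx0 a (1/a)).symm
        _ = x := by rw [mul_one_div_cancel ha.ne', Real.rpow_one]

lemma min_div_aux {a b c : ℝ} (hc : 0 < c) : min a b / c = min (a/c) (b/c) :=
  (min_div_div_right hc.le a b).symm

lemma sqrt_tendsto_atTop : Filter.Tendsto Real.sqrt Filter.atTop Filter.atTop := by
  refine Filter.tendsto_atTop.2 fun b => ?_
  filter_upwards [Filter.eventually_ge_atTop (b^2)] with x hx
  calc b ≤ |b| := le_abs_self b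
    _ = Real.sqrt (b^2) := (Real.sqrt_sq_eq_abs b).symm
    _ ≤ Real.sqrt x := Real.sqrt_le_sqrt hx

/-- Fix integers `n > k0 ≥ 1`, `p ≥ k0` and `1 ≤ k_max ≤ p`. If
`f : (0,∞) → (0,1)` satisfies `f(x) → 0` and `f(x)^{2/(n−k0)}/x² → ∞` as `x → 0⁺`, then
`Γ_RRT^{f(x)}(k0)/x → ∞` as `x → 0⁺`. -/
theorem statement_13 (n p k0 kmax : ℕ) (hk0 : 1 ≤ k0) (hn : k0 < n) (hp : k0 ≤ p)
    (hkmax1 : 1 ≤ kmax) (hkmaxp : kmax ≤ p)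
    (f : ℝ → ℝ) (hf : ∀ x : ℝ, 0 < x → 0 < f x ∧ f x < 1)
    (hf0 : Filter.Tendsto f (nhdsWithin 0 (Set.Ioi 0)) (nhds 0))
    (hfx : Filter.Tendsto
      (fun x : ℝ => f x ^ ((2 : ℝ) / ((n : ℝ) - (k0 : ℝ))) / x ^ 2)
      (nhdsWithin 0 (Set.Ioi 0)) Filter.atTop) :
    Filter.Tendsto (fun x : ℝ => GammaRRT n p kmax (f x) k0 / x)
      (nhdsWithin 0 (Set.Ioi 0)) Filter.atTop := by
  have hnk : (k0:ℝ) < (n:ℝ) := by exact_mod_cast hn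
  set A : ℝ := ((n:ℝ) - (k0:ℝ)) / 2 with hA_def
  have hA : 0 < A := by rw [hA_def]; linarith
  have hkmaxR : (1:ℝ) ≤ (kmax:ℝ) := by exact_mod_cast hkmax1
  have hpR : (k0:ℝ) ≤ (p:ℝ) := by exact_mod_cast hp
  set K : ℝ := (kmax:ℝ) * ((p:ℝ) - (k0:ℝ) + 1) with hK_def
  have hK1 : (1:ℝ) ≤ K := by rw [hK_def]; nlinarith
  have hK0 : (0:ℝ) < K := lt_of_lt_of_le one_pos hK1
  have hC := auxC_pos hA
  have hKC : (0:ℝ) < K * auxC A := mul_pos hK0 hC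
  set g : ℝ → ℝ :=
    fun x => min (((1:ℝ)/2)/x^2) ((f x / K / auxC A) ^ (1/A) / x^2) with hg_def
  -- Step 1 : eventual lower bound
  have hstep1 : ∀ᶠ x in nhdsWithin 0 (Set.Ioi 0),
      Real.sqrt (g x) ≤ GammaRRT n p kmax (f x) k0 / x := by
    filter_upwards [self_mem_nhdsWithin] with x hx
    have hx0 : (0:ℝ) < x := hx
    obtain ⟨hf1, hf2⟩ := hf x hx0
    have hz0 : 0 < f x / K := div_pos hf1 hK0
    have hz1 : f x / K ≤ 1 := by rw [div_le_one hK0]; linarith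
    have hicdf := betaICDF_ge_aux hA hz0 hz1
    have hicdf0 : 0 ≤ betaICDF A (1/2) (f x / K) :=
      Real.sInf_nonneg fun y hy => hy.1
    have hΓ : GammaRRT n p kmax (f x) k0 =
        Real.sqrt (betaICDF A (1/2) (f x / K)) := rfl
    have hg_eq : g x = min ((1:ℝ)/2) ((f x / K / auxC A) ^ (1/A)) / x^2 :=
      (min_div_aux (by positivity)).symm
    have key : g x ≤ betaICDF A (1/2) (f x / K) / x^2 := by
      rw [hg_eq]
      gcongr
    calc Real.sqrt (g x)
        ≤ Real.sqrt (betaICDF A (1/2) (f x / K) / x^2) := Real.sqrt_le_sqrt key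
      _ = Real.sqrt (betaICDF A (1/2) (f x / K)) / Real.sqrt (x^2) :=
          Real.sqrt_div hicdf0 _
      _ = Real.sqrt (betaICDF A (1/2) (f x / K)) / x := by rw [Real.sqrt_sq hx0.le]
      _ = GammaRRT n p kmax (f x) k0 / x := by rw [hΓ]
  -- Step 2 : the lower bound tends to infinity
  have hinv : Filter.Tendsto (fun x:ℝ => x⁻¹) (nhdsWithin 0 (Set.Ioi 0))
      Filter.atTop := tendsto_inv_nhdsGT_zero
  have h1' : Filter.Tendsto (fun x:ℝ => (1/2) * (x⁻¹ * x⁻¹))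
      (nhdsWithin 0 (Set.Ioi 0)) Filter.atTop :=
    (hinv.atTop_mul_atTop₀ hinv).const_mul_atTop one_half_pos
  have h1 : Filter.Tendsto (fun x:ℝ => ((1:ℝ)/2)/x^2)
      (nhdsWithin 0 (Set.Ioi 0)) Filter.atTop := by
    refine Filter.Tendsto.congr' ?_ h1'
    filter_upwards [self_mem_nhdsWithin] with x hx
    have hxne : x ≠ 0 := ne_of_gt hx
    field_simp
  have hA_inv : 1/A = (2:ℝ)/((n:ℝ)-(k0:ℝ)) := by rw [hA_def, one_div_div]
  have h2' : Filter.Tendsto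
      (fun x:ℝ => (f x ^ ((2:ℝ)/((n:ℝ)-(k0:ℝ))) / x^2) / (K * auxC A)^(1/A))
      (nhdsWithin 0 (Set.Ioi 0)) Filter.atTop :=
    Filter.Tendsto.atTop_div_const (Real.rpow_pos_of_pos hKC _) hfx
  have h2 : Filter.Tendsto (fun x:ℝ => (f x / K / auxC A) ^ (1/A) / x^2)
      (nhdsWithin 0 (Set.Ioi 0)) Filter.atTop := by
    refine Filter.Tendsto.congr' ?_ h2'
    filter_upwards [self_mem_nhdsWithin] with x hx
    have hfxpos := (hf x hx).1
    rw [div_div (f x) K (auxC A), Real.div_rpow hfxpos.le hKC.le, hA_inv]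
    ring
  have hg : Filter.Tendsto g (nhdsWithin 0 (Set.Ioi 0)) Filter.atTop := by
    rw [Filter.tendsto_atTop]
    intro b
    filter_upwards [Filter.tendsto_atTop.1 h1 b, Filter.tendsto_atTop.1 h2 b]
      with x hx1 hx2
    exact le_min hx1 hx2
  exact tendsto_atTop_mono' _ hstep1 (sqrt_tendsto_atTop.comp hg)

end RRTPaper
end
end
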